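/- Let k : ℕ → ℕ be strictly increasing and d : ℕ → ℕ a delay sequence bounded by d_max. Define e_n as the smallest j ∈ [1, n-1] with d_j + k_j > k_n - 1 (and e_n = n if no such j exists), and define T_n = ∑_{i=1}^n (i - e_i). Then T_n ≤ n · d_max for every n ≥ 1. -/
import Mathlib


open Finset

theorem total_delay_count_le
    (k d : ℕ → ℕ) (hk : StrictMono k)
    (dmax : ℕ) (hd : ∀ i, d i ≤ dmax)
    (e : ℕ → ℕ)
    (he : ∀ n, e n = sInf ({j | 1 ≤ j ∧ j ≤ n - 1 ∧ k n - 1 < d j + k j} ∪ {n}))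
    (T : ℕ → ℕ)
    (hT : ∀ n, T n = ∑ i ∈ Finset.Icc 1 n, (i - e i)) :
    ∀ n, 1 ≤ n → T n ≤ n * dmax := by
  have hkey : ∀ i, i - e i ≤ dmax := by
    intro i
    have hne : ({j | 1 ≤ j ∧ j ≤ i - 1 ∧ k i - 1 < d j + k j} ∪ {i} : Set ℕ).Nonempty :=
      ⟨i, Or.inr rfl⟩
    have hmem := Nat.sInf_mem hne
    rw [← he i] at hmem
    rcases hmem with ⟨h1, h2, h3⟩ | h
    · -- e i = j with 1 ≤ j ≤ i-1 and k i - 1 < d (e i) + k (e i)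
      have hji : e i ≤ i := le_trans h2 (Nat.sub_le i 1)
      have hki : k i ≤ d (e i) + k (e i) := by omega
      have hmono : ∀ m, k (e i) + m ≤ k (e i + m) := by
        intro m
        induction m with
        | zero => simp
        | succ m ih =>
          have h1 : k (e i + m) < k (e i + (m + 1)) := hk (Nat.lt_succ_self (e i + m))
          omega
      have := hmono (i - e i)
      rw [Nat.add_sub_cancel' hji] at this
      have := hd (e i)
      omega
    · simp only [Set.mem_singleton_iff] at h
      rw [h]
      simp
  intro n hn
  rw [hT n]
  calc ∑ i ∈ Finset.Icc 1 n, (i - e i) ≤ ∑ _i ∈ Finset.Icc 1 n, dmax :=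
        Finset.sum_le_sum fun i _ => hkey i
    _ = n * dmax := by rw [Finset.sum_const, Nat.card_Icc]; simp [mul_comm]
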